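/- For positive integers n, the entry-wise product formula holds: the inverse of the matrix M_HH with M_HH[i][j] = C(n+1, 2j - i) (1 ≤ i,j ≤ n) is given by [M_HH^{-1}]_{i,j} = C(2n, 2i-1)^{-1} Σ_{k=1}^{j} C(2n, k-1) C(n+j-k, j-k) (-1)^{k+j} Π_{l≠i} (k-2l)/(2i-2l). -/

import Mathlib

/-- Binomial coefficient `C(m, k)` for natural `m` and integer `k`, zero for `k < 0`. -/
def zchoose (m : ℕ) (k : ℤ) : ℕ := if 0 ≤ k then m.choose k.toNat else 0

open Finset Polynomial

lemma zchoose_of_neg {m : ℕ} {k : ℤ} (h : k < 0) : zchoose m k = 0 := by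
  simp [zchoose, not_le.mpr h]

lemma zchoose_sub {m x I : ℕ} (h : I ≤ x) : zchoose m ((x:ℤ) - (I:ℤ)) = m.choose (x - I) := by
  have : ((x:ℤ) - (I:ℤ)).toNat = x - I := by omega
  simp [zchoose, this, Int.sub_nonneg.mpr (Int.ofNat_le.mpr h), not_lt.mpr h]
lemma coeff_one_sub_pow (m t : ℕ) :
    PowerSeries.coeff (R := ℚ) t ((1 - PowerSeries.X)^m) = (-1)^t * m.choose t := by
  have h : ((1 - PowerSeries.X : PowerSeries ℚ))^m = ∑ a ∈ range (m+1),
      (PowerSeries.C (R := ℚ) ((-1)^a * (m.choose a : ℚ))) * PowerSeries.X^a := by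
    have := add_pow (-PowerSeries.X : PowerSeries ℚ) 1 m
    rw [neg_add_eq_sub] at this
    rw [this]
    congr! 1 with a ha
    rw [neg_pow]
    simp only [map_mul, map_pow, map_neg, map_one, map_natCast]
    ring
  rw [h, map_sum]
  simp only [PowerSeries.coeff_C_mul, PowerSeries.coeff_X_pow]
  rcases lt_or_ge t (m+1) with ht | ht
  · rw [Finset.sum_eq_single t]
    · simp
    · intro a ha hne
      simp [hne.symm]
    · intro h; exact absurd (mem_range.mpr ht) h
  · rw [Nat.choose_eq_zero_of_lt (by omega), Finset.sum_eq_zero]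
    · simp
    · intro a ha
      simp only [mem_range] at ha
      rw [if_neg (by omega)]
      simp

lemma idI (n s : ℕ) :
    ∑ t ∈ range (s+1), (-1:ℚ)^t * ((n+1).choose t) * ((n+(s-t)).choose n)
      = if s = 0 then 1 else 0 := by
  have h1 : ((1 - PowerSeries.X : PowerSeries ℚ)^(n+1)) * (PowerSeries.invOneSubPow ℚ (n+1)).val = 1 := by
    rw [← PowerSeries.invOneSubPow_inv_eq_one_sub_pow]
    exact (PowerSeries.invOneSubPow ℚ (n+1)).inv_mul
  have h2 := congrArg (PowerSeries.coeff (R := ℚ) s) h1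
  rw [PowerSeries.coeff_mul, PowerSeries.invOneSubPow_val_succ_eq_mk_add_choose] at h2
  rw [Finset.Nat.sum_antidiagonal_eq_sum_range_succ_mk] at h2
  simp only [coeff_one_sub_pow, PowerSeries.coeff_mk, PowerSeries.coeff_one] at h2
  rw [← h2]
noncomputable def FF (n I : ℕ) : Polynomial ℚ :=
  Polynomial.C (((n+1).factorial : ℚ) / ((2*n).factorial : ℚ)) *
    ((∏ r ∈ range (I-1), (Polynomial.X - Polynomial.C ((r:ℚ)+1))) *
     ∏ t ∈ range (n-I), (Polynomial.C ((n:ℚ)+(I:ℚ)+2+(t:ℚ)) - Polynomial.X))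

lemma FF_degree_lt (n I : ℕ) (hI1 : 1 ≤ I) (hIn : I ≤ n) : (FF n I).degree < (n : ℕ) := by
  have h1 : (∏ r ∈ range (I-1), (Polynomial.X - Polynomial.C ((r:ℚ)+1))).degree = ((I-1 : ℕ) : WithBot ℕ) := by
    rw [Polynomial.degree_prod]
    have : ∀ r ∈ range (I-1), (Polynomial.X - Polynomial.C ((r:ℚ)+1)).degree = 1 :=
      fun r _ => Polynomial.degree_X_sub_C _
    rw [Finset.sum_congr rfl this, Finset.sum_const, card_range, nsmul_eq_mul, mul_one]
  have h2 : (∏ t ∈ range (n-I), (Polynomial.C ((n:ℚ)+(I:ℚ)+2+(t:ℚ)) - Polynomial.X)).degree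
      = ((n-I : ℕ) : WithBot ℕ) := by
    rw [Polynomial.degree_prod]
    have : ∀ t ∈ range (n-I),
        (Polynomial.C ((n:ℚ)+(I:ℚ)+2+(t:ℚ)) - Polynomial.X).degree = 1 := by
      intro t _
      rw [show (Polynomial.C ((n:ℚ)+(I:ℚ)+2+(t:ℚ)) - Polynomial.X)
        = -(Polynomial.X - Polynomial.C ((n:ℚ)+(I:ℚ)+2+(t:ℚ))) by ring, Polynomial.degree_neg,
        Polynomial.degree_X_sub_C]
    rw [Finset.sum_congr rfl this, Finset.sum_const, card_range, nsmul_eq_mul, mul_one]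
  calc (FF n I).degree ≤ 0 + (((I-1 : ℕ) : WithBot ℕ) + ((n-I : ℕ) : WithBot ℕ)) := by
        apply le_trans (Polynomial.degree_mul_le _ _)
        apply add_le_add (Polynomial.degree_C_le)
        apply le_trans (Polynomial.degree_mul_le _ _)
        rw [h1, h2]
    _ < ((n : ℕ) : WithBot ℕ) := by
        rw [zero_add, ← Nat.cast_add]
        rw [Nat.cast_lt (α := WithBot ℕ)]
        omega
lemma FF_eval_eq (n I x : ℕ) :
    (FF n I).eval (x:ℚ) = (((n+1).factorial : ℚ) / ((2*n).factorial : ℚ)) *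
      ((∏ r ∈ range (I-1), ((x:ℚ) - ((r:ℚ)+1))) *
       ∏ t ∈ range (n-I), (((n:ℚ)+(I:ℚ)+2+(t:ℚ)) - (x:ℚ))) := by
  simp [FF, eval_prod]

lemma FF_eval (n I : ℕ) (hI1 : 1 ≤ I) (hIn : I ≤ n) (x : ℕ) (hx1 : 1 ≤ x) (hx2 : x ≤ 2*n) :
    (FF n I).eval (x:ℚ) =
      (zchoose (n+1) ((x:ℤ) - (I:ℤ)) : ℚ) / (((2*n).choose (x-1) : ℕ) : ℚ) := by
  rw [FF_eval_eq]
  rcases lt_or_ge x I with hxI | hxI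
  · -- x < I : both sides zero
    rw [zchoose_of_neg (by omega : (x:ℤ) - (I:ℤ) < 0)]
    have hz : (∏ r ∈ range (I-1), ((x:ℚ) - ((r:ℚ)+1))) = 0 :=
      Finset.prod_eq_zero (i := x - 1) (Finset.mem_range.mpr (by omega))
        (by push_cast [Nat.cast_sub hx1]; ring)
    rw [hz]
    simp
  rcases lt_or_ge (n + I + 1) x with hbig | hsmall
  · -- x ≥ n+I+2 : both sides zero
    rw [zchoose_sub hxI, Nat.choose_eq_zero_of_lt (by omega : n + 1 < x - I)]
    have hz : (∏ t ∈ range (n-I), (((n:ℚ)+(I:ℚ)+2+(t:ℚ)) - (x:ℚ))) = 0 :=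
      Finset.prod_eq_zero (i := x - (n + I + 2)) (Finset.mem_range.mpr (by omega))
        (by push_cast [Nat.cast_sub (by omega : n + I + 2 ≤ x)]; ring)
    rw [hz]
    simp
  · -- main case I ≤ x ≤ n+I+1
    rw [zchoose_sub hxI]
    have hP1 : (∏ r ∈ range (I-1), ((x:ℚ) - ((r:ℚ)+1)))
        = (((x-1).descFactorial (I-1) : ℕ) : ℚ) := by
      rw [Nat.descFactorial_eq_prod_range, Nat.cast_prod]
      apply Finset.prod_congr rfl
      intro r hr
      rw [Finset.mem_range] at hr
      rw [Nat.cast_sub (by omega), Nat.cast_sub (by omega)]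
      push_cast; ring
    have hP2 : (∏ t ∈ range (n-I), (((n:ℚ)+(I:ℚ)+2+(t:ℚ)) - (x:ℚ)))
        = (((2*n+1-x).descFactorial (n-I) : ℕ) : ℚ) := by
      rw [Nat.descFactorial_eq_prod_range, ← Finset.prod_range_reflect, Nat.cast_prod]
      apply Finset.prod_congr rfl
      intro t ht
      rw [Finset.mem_range] at ht
      rw [show (2*n+1-x-t : ℕ) = n+I+2+(n-I-1-t)-x from by omega,
        Nat.cast_sub (show x ≤ n+I+2+(n-I-1-t) from by omega)]
      push_cast
      ring
    rw [hP1, hP2]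
    -- now pure factorial computation
    have e1 : (((x-I).factorial : ℕ) : ℚ) * (((x-1).descFactorial (I-1) : ℕ) : ℚ)
        = ((x-1).factorial : ℚ) := by
      rw [← Nat.cast_mul, (by omega : x - I = (x-1) - (I-1)),
        Nat.factorial_mul_descFactorial (by omega)]
    have e2 : (((n+I+1-x).factorial : ℕ) : ℚ) * (((2*n+1-x).descFactorial (n-I) : ℕ) : ℚ)
        = ((2*n+1-x).factorial : ℚ) := by
      rw [← Nat.cast_mul, (by omega : n+I+1-x = (2*n+1-x) - (n-I)),
        Nat.factorial_mul_descFactorial (by omega)]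
    rw [Nat.cast_choose ℚ (by omega : x - I ≤ n + 1),
      Nat.cast_choose ℚ (by omega : x - 1 ≤ 2*n),
      (by omega : n + 1 - (x - I) = n+I+1-x), (by omega : 2*n - (x-1) = 2*n+1-x)]
    have f0 : ∀ m : ℕ, ((m.factorial : ℕ) : ℚ) ≠ 0 :=
      fun m => Nat.cast_ne_zero.mpr (Nat.factorial_ne_zero m)
    have key : (((n+1).factorial : ℕ) : ℚ) * ((((x-1).descFactorial (I-1) : ℕ) : ℚ)
          * (((2*n+1-x).descFactorial (n-I) : ℕ) : ℚ))
        * (((x-I).factorial : ℚ) * ((n+I+1-x).factorial : ℚ))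
        = ((n+1).factorial : ℚ) * (((x-1).factorial : ℚ) * ((2*n+1-x).factorial : ℚ)) := by
      rw [← e1, ← e2]; ring
    field_simp
    linear_combination (((n+I+1-x).factorial : ℕ) : ℚ) * (((2*n+1-x).descFactorial (n-I) : ℕ) : ℚ) * e1
      + (((x-1).factorial : ℕ) : ℚ) * e2
lemma lag (n : ℕ) (f : Polynomial ℚ) (hdeg : f.degree < (n:ℕ)) (k : ℚ) :
    ∑ m : Fin n, f.eval (2*((m.1:ℚ)+1)) *
      ∏ l ∈ Finset.univ.erase m,
        ((k - 2*((l.1:ℚ)+1)) / (2*((m.1:ℚ)+1) - 2*((l.1:ℚ)+1)))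
    = f.eval k := by
  set v : Fin n → ℚ := fun l => 2*((l.1:ℚ)+1) with hv
  have hinj : Set.InjOn v (Finset.univ : Finset (Fin n)) := by
    intro a _ b _ hab
    simp only [v] at hab
    have : (a.1 : ℚ) = b.1 := by linarith
    exact Fin.ext (Nat.cast_injective this)
  have h := Lagrange.eq_interpolate hinj
    (f := f) (by rw [Finset.card_univ, Fintype.card_fin]; exact hdeg)
  have h2 := congrArg (Polynomial.eval k) h
  rw [Lagrange.interpolate_apply, Polynomial.eval_finset_sum] at h2
  rw [h2]
  apply Finset.sum_congr rfl
  intro m _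
  rw [Polynomial.eval_mul, Polynomial.eval_C, Lagrange.basis, Polynomial.eval_prod]
  congr 1
  apply Finset.prod_congr rfl
  intro l hl
  simp only [Lagrange.basisDivisor, Polynomial.eval_mul, Polynomial.eval_C,
    Polynomial.eval_sub, Polynomial.eval_X, div_eq_mul_inv]
  ring

/-- The explicit inverse of the Lindström–Gessel–Viennot matrix
`M_HH = [C(n+1, 2j-i)]_{i,j=1}^n` of the order-`n` Novak half-hexagon:
`[M_HH⁻¹]_{i,j} = C(2n,2i-1)⁻¹ Σ_{k=1}^j C(2n,k-1) C(n+j-k,j-k)(-1)^{k+j}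
Π_{l≠i}(k-2l)/(2i-2l)`. -/
theorem half_hexagon_inverse (n : ℕ) (hn : 1 ≤ n)
    (M N : Matrix (Fin n) (Fin n) ℚ)
    (hM : ∀ i j, M i j = (zchoose (n + 1) (2 * (j.1 + 1) - (i.1 + 1)) : ℚ))
    (hN : ∀ i j, N i j = ((Nat.choose (2 * n) (2 * (i.1 + 1) - 1) : ℚ))⁻¹ *
      ∑ k ∈ Finset.Icc 1 (j.1 + 1),
        (Nat.choose (2 * n) (k - 1) : ℚ) *
        (Nat.choose (n + (j.1 + 1) - k) ((j.1 + 1) - k) : ℚ) *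
        (-1) ^ (k + (j.1 + 1)) *
        ∏ l ∈ Finset.univ.erase i,
          ((k : ℚ) - 2 * (l.1 + 1)) / (2 * ((i.1 : ℚ) + 1) - 2 * (l.1 + 1))) :
    M * N = 1 ∧ N * M = 1 := by
  have main : M * N = 1 := by
    ext i j
    rw [Matrix.mul_apply, Matrix.one_apply]
    have hI1 : 1 ≤ i.1 + 1 := by omega
    have hIn : i.1 + 1 ≤ n := i.isLt
    have hJn : j.1 + 1 ≤ n := j.isLt
    have hdeg := FF_degree_lt n (i.1+1) hI1 hIn
    have step1 : ∀ k ∈ Finset.Icc 1 (j.1+1),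
        (∑ m : Fin n, (zchoose (n+1) (2 * ((m.1:ℤ) + 1) - ((i.1:ℤ) + 1)) : ℚ) *
          (((2*n).choose (2*(m.1+1)-1) : ℚ))⁻¹ *
          ∏ l ∈ Finset.univ.erase m,
            (((k:ℚ) - 2*((l.1:ℚ)+1)) / (2*((m.1:ℚ)+1) - 2*((l.1:ℚ)+1))))
        = (zchoose (n+1) ((k:ℤ) - ((i.1:ℤ)+1)) : ℚ) / (((2*n).choose (k-1) : ℕ) : ℚ) := by
      intro k hk
      rw [Finset.mem_Icc] at hk
      have e0 := FF_eval n (i.1+1) hI1 hIn k hk.1 (by omega)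
      have hz0 : ((k:ℤ) - ((i.1+1 : ℕ) : ℤ)) = (k:ℤ) - ((i.1:ℤ)+1) := by push_cast; ring
      rw [hz0] at e0
      rw [← e0, ← lag n (FF n (i.1+1)) hdeg (k:ℚ)]
      apply Finset.sum_congr rfl
      intro m _
      congr 1
      have e := FF_eval n (i.1+1) hI1 hIn (2*(m.1+1)) (by omega) (by omega)
      have hc : ((2*(m.1+1) : ℕ) : ℚ) = 2*((m.1:ℚ)+1) := by push_cast; ring
      have hz : (((2*(m.1+1) : ℕ) : ℤ) - ((i.1+1 : ℕ) : ℤ))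
          = 2*((m.1:ℤ)+1) - ((i.1:ℤ)+1) := by push_cast; ring
      rw [hc, hz] at e
      rw [e, div_eq_mul_inv]
    have hs : (∑ m : Fin n, M i m * N m j)
        = ∑ k ∈ Finset.Icc 1 (j.1+1),
            (((2*n).choose (k-1) : ℚ) * ((n+(j.1+1)-k).choose ((j.1+1)-k) : ℚ)
              * (-1)^(k+(j.1+1))) *
            (∑ m : Fin n, (zchoose (n+1) (2 * ((m.1:ℤ) + 1) - ((i.1:ℤ) + 1)) : ℚ) *
              (((2*n).choose (2*(m.1+1)-1) : ℚ))⁻¹ *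
              ∏ l ∈ Finset.univ.erase m,
                (((k:ℚ) - 2*((l.1:ℚ)+1)) / (2*((m.1:ℚ)+1) - 2*((l.1:ℚ)+1)))) := by
      simp only [hM, hN, Finset.mul_sum]
      rw [Finset.sum_comm]
      apply Finset.sum_congr rfl
      intro k _
      apply Finset.sum_congr rfl
      intro m _
      ring
    rw [hs, Finset.sum_congr rfl (fun k hk => by rw [step1 k hk])]
    have hcancel : ∀ k ∈ Finset.Icc 1 (j.1+1),
        (((2*n).choose (k-1) : ℚ) * ((n+(j.1+1)-k).choose ((j.1+1)-k) : ℚ)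
            * (-1)^(k+(j.1+1))) *
          ((zchoose (n+1) ((k:ℤ) - ((i.1:ℤ)+1)) : ℚ) / (((2*n).choose (k-1) : ℕ) : ℚ))
        = ((n+(j.1+1)-k).choose ((j.1+1)-k) : ℚ) * (-1)^(k+(j.1+1))
            * (zchoose (n+1) ((k:ℤ) - ((i.1:ℤ)+1)) : ℚ) := by
      intro k hk
      rw [Finset.mem_Icc] at hk
      have hne : (((2*n).choose (k-1) : ℕ) : ℚ) ≠ 0 :=
        Nat.cast_ne_zero.mpr (Nat.choose_pos (by omega)).ne'
      field_simp
    rw [Finset.sum_congr rfl hcancel]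
    rcases lt_or_ge j.1 i.1 with hlt | hle
    · rw [if_neg (fun h => by rw [h] at hlt; omega)]
      apply Finset.sum_eq_zero
      intro k hk
      rw [Finset.mem_Icc] at hk
      rw [zchoose_of_neg (by omega : (k:ℤ) - ((i.1:ℤ)+1) < 0)]
      simp
    · have hsub : Finset.Icc (i.1+1) (j.1+1) ⊆ Finset.Icc 1 (j.1+1) :=
        Finset.Icc_subset_Icc (by omega) le_rfl
      rw [← Finset.sum_subset hsub (fun k hk hk2 => by
        rw [Finset.mem_Icc] at hk
        rw [Finset.mem_Icc] at hk2
        rw [zchoose_of_neg (by omega : (k:ℤ) - ((i.1:ℤ)+1) < 0)]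
        simp)]
      rw [← Finset.Ico_add_one_right_eq_Icc, Finset.sum_Ico_eq_sum_range]
      rw [show j.1+1+1-(i.1+1) = (j.1-i.1)+1 from by omega]
      have hterm : ∀ t ∈ Finset.range ((j.1-i.1)+1),
          ((n+(j.1+1)-(i.1+1+t)).choose ((j.1+1)-(i.1+1+t)) : ℚ)
            * (-1)^((i.1+1+t)+(j.1+1))
            * (zchoose (n+1) (((i.1+1+t : ℕ):ℤ) - ((i.1:ℤ)+1)) : ℚ)
          = (-1)^(j.1-i.1) * ((-1)^t * ((n+1).choose t : ℚ)
              * ((n+((j.1-i.1)-t)).choose n : ℚ)) := by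
        intro t ht
        rw [Finset.mem_range] at ht
        have hz : (((i.1+1+t : ℕ):ℤ) - ((i.1:ℤ)+1)) = ((i.1+1+t : ℕ):ℤ) - ((i.1+1 : ℕ):ℤ) := by
          push_cast; ring
        rw [hz, zchoose_sub (by omega), show i.1+1+t - (i.1+1) = t from by omega]
        rw [show n+(j.1+1)-(i.1+1+t) = n+((j.1-i.1)-t) from by omega,
          show (j.1+1)-(i.1+1+t) = (j.1-i.1)-t from by omega]
        rw [show (n+((j.1-i.1)-t)).choose ((j.1-i.1)-t) = (n+((j.1-i.1)-t)).choose n from by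
          rw [← Nat.choose_symm (Nat.le_add_left _ _), Nat.add_sub_cancel]]
        rw [show (i.1+1+t)+(j.1+1) = 2*(i.1+1) + ((j.1-i.1)+t) from by omega,
          pow_add, pow_mul, neg_one_sq, one_pow, one_mul, pow_add]
        ring
      rw [Finset.sum_congr rfl hterm, ← Finset.mul_sum, idI n (j.1-i.1)]
      by_cases hij : i = j
      · rw [if_pos hij, if_pos (by rw [hij]; omega), hij]
        simp
      · rw [if_neg hij, if_neg (fun h => hij (Fin.ext (by omega))), mul_zero]
  exact ⟨main, mul_eq_one_comm.mp main⟩
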